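/- In an admissible Poisson algebra, for any element X and any i, j ≥ 1, the powers commute: X^i · X^j = X^j · X^i. -/
import Mathlib


variable {K : Type*} [Field K] {P : Type*} [AddCommGroup P] [Module K P]

/-- The associator of a bilinear multiplication. -/
def assocOf (m : P →ₗ[K] P →ₗ[K] P) (X Y Z : P) : P := m (m X Y) Z - m X (m Y Z)

/-- Admissible Poisson algebra condition:
`3 A(X,Y,Z) = (X·Z)·Y + (Y·Z)·X - (Y·X)·Z - (Z·X)·Y`. -/
def IsAdmissible (m : P →ₗ[K] P →ₗ[K] P) : Prop :=
  ∀ X Y Z : P, (3 : ℤ) • assocOf m X Y Z =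
    m (m X Z) Y + m (m Y Z) X - m (m Y X) Z - m (m Z X) Y

/-- The antisymmetrized bracket `{X,Y} = (X·Y - Y·X)/2`. -/
def brOf (m : P →ₗ[K] P →ₗ[K] P) (X Y : P) : P := (2 : K)⁻¹ • (m X Y - m Y X)

/-- The symmetrized product `X∙Y = (X·Y + Y·X)/2`. -/
def bulOf (m : P →ₗ[K] P →ₗ[K] P) (X Y : P) : P := (2 : K)⁻¹ • (m X Y + m Y X)

/-- Powers: `pw m X n = X^(n+1)`, i.e. `X^1 = X`, `X^(i+1) = X · X^i`. -/
def pw (m : P →ₗ[K] P →ₗ[K] P) (X : P) : ℕ → P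
  | 0 => X
  | n + 1 => m X (pw m X n)

/-- Leibniz-type consequence of admissibility: the commutator with `X` is a
derivation of the symmetrized product, written without any scalars. -/
lemma leib (h3 : (3 : K) ≠ 0) (m : P →ₗ[K] P →ₗ[K] P) (hm : IsAdmissible m)
    (X Y Z : P) :
    m X (m Y Z) + m X (m Z Y) - m (m Y Z) X - m (m Z Y) X =
      m (m X Y) Z - m (m Y X) Z + m Z (m X Y) - m Z (m Y X)
        + m Y (m X Z) - m Y (m Z X) + m (m X Z) Y - m (m Z X) Y := by
  apply smul_right_injective P h3
  have e1 := hm X Y Z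
  have e2 := hm X Z Y
  have e3 := hm Y X Z
  have e4 := hm Y Z X
  have e5 := hm Z X Y
  have e6 := hm Z Y X
  simp only [assocOf] at e1 e2 e3 e4 e5 e6
  linear_combination (norm := module) (-1 : K) • e1 - (1 : K) • e2 + (1 : K) • e3
    - (1 : K) • e4 + (1 : K) • e5 - (1 : K) • e6

/-- `X` commutes with all its powers. -/
lemma comm_base (h2 : (2 : K) ≠ 0) (h3 : (3 : K) ≠ 0)
    (m : P →ₗ[K] P →ₗ[K] P) (hm : IsAdmissible m) (X : P) :
    ∀ n : ℕ, m X (pw m X n) = m (pw m X n) X := by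
  intro n
  induction n with
  | zero => rfl
  | succ n ih =>
    apply smul_right_injective P h2
    have h := leib h3 m hm X X (pw m X n)
    rw [← ih] at h
    show (2 : K) • m X (m X (pw m X n)) = (2 : K) • m (m X (pw m X n)) X
    linear_combination (norm := module) (1 : K) • h

/-- in an admissible Poisson algebra powers of an element commute:
`X^i · X^j = X^j · X^i` for all `i, j ≥ 1` (here `pw m X n` denotes `X^(n+1)`). -/
theorem stmt6 (h2 : (2 : K) ≠ 0) (h3 : (3 : K) ≠ 0)
    (m : P →ₗ[K] P →ₗ[K] P) (hm : IsAdmissible m) :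
    ∀ (X : P) (i j : ℕ), m (pw m X i) (pw m X j) = m (pw m X j) (pw m X i) := by
  intro X i j
  induction j with
  | zero => exact (comm_base h2 h3 m hm X i).symm
  | succ j ih =>
    apply smul_right_injective P h2
    have h := leib h3 m hm (pw m X i) X (pw m X j)
    have hb := comm_base h2 h3 m hm X i
    have hbj := comm_base h2 h3 m hm X j
    rw [← hb, ih, ← hbj] at h
    show (2 : K) • m (pw m X i) (m X (pw m X j)) = (2 : K) • m (m X (pw m X j)) (pw m X i)
    linear_combination (norm := module) (1 : K) • h
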